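/- Let M, B be finitely-valued random variables, let Y = (Y_1,…,Y_m) be a tuple of random variables each taking values in a finite set of cardinality d, let s ⊆ {1,…,m} with |s| = r ≤ m, and set Z = (Y_i)_{i∈s}. Assume B = g(Y) for some function g and I(M ; Z) = 0. Then I(M ; B) ≤ (m − r) · log d. -/

import Mathlib

open Finset

/-- Probability that the finitely-valued random variable `X` takes value `x`,
with respect to the probability mass function `p` on the finite sample space `Ω`. -/
noncomputable def pmfProb {Ω : Type*} [Fintype Ω] {α : Type*} [Fintype α] [DecidableEq α]
    (p : Ω → ℝ) (X : Ω → α) (x : α) : ℝ :=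
  ∑ ω, if X ω = x then p ω else 0

/-- Shannon entropy (natural logarithm) of the random variable `X`. -/
noncomputable def entH {Ω : Type*} [Fintype Ω] {α : Type*} [Fintype α] [DecidableEq α]
    (p : Ω → ℝ) (X : Ω → α) : ℝ :=
  ∑ x, Real.negMulLog (pmfProb p X x)

/-- Conditional Shannon entropy `H(X|Y) = H(X,Y) - H(Y)`. -/
noncomputable def condH {Ω : Type*} [Fintype Ω] {α β : Type*} [Fintype α] [DecidableEq α]
    [Fintype β] [DecidableEq β] (p : Ω → ℝ) (X : Ω → α) (Y : Ω → β) : ℝ :=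
  entH p (fun ω => (X ω, Y ω)) - entH p Y

/-- Mutual information `I(X;Y) = H(X) + H(Y) - H(X,Y)`. -/
noncomputable def mutInfo {Ω : Type*} [Fintype Ω] {α β : Type*} [Fintype α] [DecidableEq α]
    [Fintype β] [DecidableEq β] (p : Ω → ℝ) (X : Ω → α) (Y : Ω → β) : ℝ :=
  entH p X + entH p Y - entH p (fun ω => (X ω, Y ω))

/-- The conditional probability mass function given an event `E`. -/
noncomputable def condPMF {Ω : Type*} [Fintype Ω] (p : Ω → ℝ) (E : Ω → Prop)
    [DecidablePred E] : Ω → ℝ :=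
  fun ω => if E ω then p ω / (∑ ω' ∈ Finset.univ.filter E, p ω') else 0

/-- Gibbs-type inequality: "mutual information" of an (unnormalized) nonnegative
distribution on a product of two finite types is nonnegative. -/
lemma mi_dist {α β : Type*} [Fintype α] [Fintype β] (q : α → β → ℝ)
    (hq : ∀ x y, 0 ≤ q x y) :
    (∑ x, ∑ y, Real.negMulLog (q x y)) + Real.negMulLog (∑ x, ∑ y, q x y)
      ≤ (∑ x, Real.negMulLog (∑ y, q x y)) + ∑ y, Real.negMulLog (∑ x, q x y) := by
  classical
  set S : ℝ := ∑ x, ∑ y, q x y with hSdef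
  by_cases hS0 : S = 0
  · have hq0 : ∀ x y, q x y = 0 := by
      intro x y
      have h1 : ∀ x ∈ Finset.univ (α := α), (0:ℝ) ≤ ∑ y, q x y :=
        fun x _ => Finset.sum_nonneg fun y _ => hq x y
      have h2 := (Finset.sum_eq_zero_iff_of_nonneg h1).mp hS0 x (Finset.mem_univ x)
      have h3 := (Finset.sum_eq_zero_iff_of_nonneg (fun y _ => hq x y)).mp h2 y
        (Finset.mem_univ y)
      exact h3
    simp [hq0, hS0]
  · have hSnn : 0 ≤ S := Finset.sum_nonneg fun x _ =>
      Finset.sum_nonneg fun y _ => hq x y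
    have hSpos : 0 < S := lt_of_le_of_ne hSnn (Ne.symm hS0)
    set a : α → ℝ := fun x => ∑ y, q x y with hadef
    set b : β → ℝ := fun y => ∑ x, q x y with hbdef
    have ha : ∀ x, 0 ≤ a x := fun x => Finset.sum_nonneg fun y _ => hq x y
    have hb : ∀ y, 0 ≤ b y := fun y => Finset.sum_nonneg fun x _ => hq x y
    have hA : ∑ x, a x = S := rfl
    have hBsum : ∑ y, b y = S := by rw [hSdef]; exact (Finset.sum_comm).symm
    -- pointwise key inequality
    have key : ∀ x y, q x y - a x * b y / S ≤
        q x y * Real.log (q x y) + q x y * Real.log S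
          - q x y * Real.log (a x) - q x y * Real.log (b y) := by
      intro x y
      rcases eq_or_lt_of_le (hq x y) with h0 | hpos
      · rw [← h0]
        simp only [zero_mul, sub_zero, zero_sub, add_zero, zero_add]
        have : 0 ≤ a x * b y / S := div_nonneg (mul_nonneg (ha x) (hb y)) hSnn
        linarith
      · have hax : 0 < a x :=
          lt_of_lt_of_le hpos (Finset.single_le_sum (fun y _ => hq x y) (Finset.mem_univ y))
        have hby : 0 < b y :=
          lt_of_lt_of_le hpos (Finset.single_le_sum (fun x _ => hq x y) (Finset.mem_univ x))
        have hc : 0 < a x * b y / S / q x y := by positivity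
        have hl := Real.log_le_sub_one_of_pos hc
        have hle : Real.log (a x * b y / S / q x y)
            = Real.log (a x) + Real.log (b y) - Real.log S - Real.log (q x y) := by
          rw [Real.log_div (by positivity) (ne_of_gt hpos),
            Real.log_div (by positivity) (ne_of_gt hSpos),
            Real.log_mul (ne_of_gt hax) (ne_of_gt hby)]
        rw [hle] at hl
        have h2 : q x y * (a x * b y / S / q x y) = a x * b y / S := by
          field_simp
        nlinarith [mul_le_mul_of_nonneg_left hl (le_of_lt hpos)]
    have sum_key := Finset.sum_le_sum (f := fun x => ∑ y, (q x y - a x * b y / S))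
      (g := fun x => ∑ y, (q x y * Real.log (q x y) + q x y * Real.log S
          - q x y * Real.log (a x) - q x y * Real.log (b y)))
      (s := Finset.univ)
      (fun x _ => Finset.sum_le_sum fun y _ => key x y)
    have lhs_eq : ∑ x, ∑ y, (q x y - a x * b y / S) = 0 := by
      have h1 : ∀ x, ∑ y, (q x y - a x * b y / S) = a x - a x * S / S := by
        intro x
        rw [Finset.sum_sub_distrib]
        congr 1
        rw [← Finset.sum_div, ← Finset.mul_sum, hBsum]
      rw [Finset.sum_congr rfl fun x _ => h1 x]
      have h2 : ∀ x, a x - a x * S / S = 0 := by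
        intro x; rw [mul_div_assoc, div_self hS0, mul_one, sub_self]
      rw [Finset.sum_congr rfl fun x _ => h2 x, Finset.sum_const, smul_zero]
    -- now rewrite the four entropy sums
    have E1 : ∑ x, Real.negMulLog (a x) = ∑ x, ∑ y, -(q x y * Real.log (a x)) := by
      refine Finset.sum_congr rfl fun x _ => ?_
      rw [Real.negMulLog, hadef]
      simp only [neg_mul]
      rw [Finset.sum_mul, ← Finset.sum_neg_distrib]
    have E2 : ∑ y, Real.negMulLog (b y) = ∑ x, ∑ y, -(q x y * Real.log (b y)) := by
      rw [Finset.sum_comm]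
      refine Finset.sum_congr rfl fun y _ => ?_
      rw [Real.negMulLog, hbdef]
      simp only [neg_mul]
      rw [Finset.sum_mul, ← Finset.sum_neg_distrib]
    have E3 : Real.negMulLog S = ∑ x, ∑ y, -(q x y * Real.log S) := by
      rw [Real.negMulLog, hSdef]
      simp only [neg_mul]
      rw [Finset.sum_mul, ← Finset.sum_neg_distrib]
      refine Finset.sum_congr rfl fun x _ => ?_
      rw [Finset.sum_mul, ← Finset.sum_neg_distrib]
    have E4 : ∑ x, ∑ y, Real.negMulLog (q x y)
        = ∑ x, ∑ y, -(q x y * Real.log (q x y)) := by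
      refine Finset.sum_congr rfl fun x _ => Finset.sum_congr rfl fun y _ => ?_
      rw [Real.negMulLog, neg_mul]
    have split : ∑ x, ∑ y, (q x y * Real.log (q x y) + q x y * Real.log S
          - q x y * Real.log (a x) - q x y * Real.log (b y))
        = (∑ x, ∑ y, q x y * Real.log (q x y)) + (∑ x, ∑ y, q x y * Real.log S)
          - (∑ x, ∑ y, q x y * Real.log (a x)) - (∑ x, ∑ y, q x y * Real.log (b y)) := by
      simp [Finset.sum_add_distrib, Finset.sum_sub_distrib]
    rw [lhs_eq, split] at sum_key
    rw [E1, E2, E3, E4]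
    simp only [Finset.sum_neg_distrib] at *
    linarith

section helpers
variable {Ω : Type*} [Fintype Ω] {α β γ : Type*} [Fintype α] [DecidableEq α]
  [Fintype β] [DecidableEq β] [Fintype γ] [DecidableEq γ] (p : Ω → ℝ)

lemma pmfProb_nonneg (hp : ∀ ω, 0 ≤ p ω) (X : Ω → α) (x : α) : 0 ≤ pmfProb p X x :=
  Finset.sum_nonneg fun ω _ => by split <;> [exact hp ω; rfl]

lemma sum_pmfProb (X : Ω → α) : ∑ x, pmfProb p X x = ∑ ω, p ω := by
  unfold pmfProb
  rw [Finset.sum_comm]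
  refine Finset.sum_congr rfl fun ω _ => ?_
  simp

lemma entH_comp (e : α → β) (he : Function.Injective e) (X : Ω → α) :
    entH p (fun ω => e (X ω)) = entH p X := by
  unfold entH
  have h0 : ∀ b ∉ Finset.univ.image e,
      Real.negMulLog (pmfProb p (fun ω => e (X ω)) b) = 0 := by
    intro b hb
    have : pmfProb p (fun ω => e (X ω)) b = 0 := by
      refine Finset.sum_eq_zero fun ω _ => ?_
      rw [if_neg]
      intro h
      exact hb (Finset.mem_image.mpr ⟨X ω, Finset.mem_univ _, h⟩)
    rw [this, Real.negMulLog_zero]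
  rw [← Finset.sum_subset (Finset.subset_univ (Finset.univ.image e)) (fun b _ hb => h0 b hb)]
  rw [Finset.sum_image (fun a _ a' _ h => he h)]
  refine Finset.sum_congr rfl fun x _ => ?_
  congr 1
  exact Finset.sum_congr rfl fun ω _ => if_congr he.eq_iff rfl rfl

lemma entH_const (hp1 : ∑ ω, p ω = 1) (c : β) : entH p (fun _ : Ω => c) = 0 := by
  unfold entH
  have h : ∀ x : β, pmfProb p (fun _ : Ω => c) x = if c = x then 1 else 0 := by
    intro x
    unfold pmfProb
    split <;> simp_all
  refine Finset.sum_eq_zero fun x _ => ?_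
  rw [h x]
  split <;> simp

lemma pmfProb_marg2 (X : Ω → α) (Yv : Ω → β) (Z : Ω → γ) (x : α) (z : γ) :
    pmfProb p (fun ω => (X ω, Z ω)) (x, z)
      = ∑ y, pmfProb p (fun ω => (X ω, (Yv ω, Z ω))) (x, (y, z)) := by
  unfold pmfProb
  rw [Finset.sum_comm]
  refine Finset.sum_congr rfl fun ω _ => ?_
  simp only [Prod.mk.injEq]
  by_cases hxz : X ω = x ∧ Z ω = z
  · simp [hxz.1, hxz.2]
  · rw [if_neg hxz]
    refine (Finset.sum_eq_zero fun y _ => ?_).symm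
    exact if_neg fun h => hxz ⟨h.1, h.2.2⟩

lemma pmfProb_marg3 (X : Ω → α) (Yv : Ω → β) (Z : Ω → γ) (y : β) (z : γ) :
    pmfProb p (fun ω => (Yv ω, Z ω)) (y, z)
      = ∑ x, pmfProb p (fun ω => (X ω, (Yv ω, Z ω))) (x, (y, z)) := by
  unfold pmfProb
  rw [Finset.sum_comm]
  refine Finset.sum_congr rfl fun ω _ => ?_
  simp only [Prod.mk.injEq]
  by_cases hyz : Yv ω = y ∧ Z ω = z
  · simp [hyz.1, hyz.2]
  · rw [if_neg hyz]
    refine (Finset.sum_eq_zero fun x _ => ?_).symm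
    exact if_neg fun h => hyz ⟨h.2.1, h.2.2⟩

lemma pmfProb_marg1 (X : Ω → α) (Yv : Ω → β) (Z : Ω → γ) (z : γ) :
    pmfProb p Z z
      = ∑ x, ∑ y, pmfProb p (fun ω => (X ω, (Yv ω, Z ω))) (x, (y, z)) := by
  unfold pmfProb
  have h1 : ∀ x : α, (∑ y : β, ∑ ω : Ω,
      if (fun ω => (X ω, (Yv ω, Z ω))) ω = (x, (y, z)) then p ω else 0)
      = ∑ ω : Ω, ∑ y : β,
      if (fun ω => (X ω, (Yv ω, Z ω))) ω = (x, (y, z)) then p ω else 0 :=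
    fun x => Finset.sum_comm
  rw [Finset.sum_congr rfl fun x _ => h1 x, Finset.sum_comm]
  refine Finset.sum_congr rfl fun ω _ => ?_
  simp only [Prod.mk.injEq]
  by_cases hz : Z ω = z
  · simp [hz, ite_and]
  · rw [if_neg hz]
    refine (Finset.sum_eq_zero fun y _ => Finset.sum_eq_zero fun x _ => ?_).symm
    exact if_neg fun h => hz h.2.2

/-- `I(X;Y|Z) ≥ 0` phrased with joint entropies. -/
lemma cmi (hp : ∀ ω, 0 ≤ p ω) (X : Ω → α) (Yv : Ω → β) (Z : Ω → γ) :
    entH p (fun ω => (X ω, (Yv ω, Z ω))) + entH p Z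
      ≤ entH p (fun ω => (X ω, Z ω)) + entH p (fun ω => (Yv ω, Z ω)) := by
  classical
  set q : α → β → γ → ℝ :=
    fun x y z => pmfProb p (fun ω => (X ω, (Yv ω, Z ω))) (x, (y, z)) with hqdef
  have hqn : ∀ z : γ, ∀ x : α, ∀ y : β, 0 ≤ q x y z :=
    fun z x y => pmfProb_nonneg p hp _ _
  have key := Finset.sum_le_sum (s := Finset.univ)
    (fun (z : γ) _ => mi_dist (fun x y => q x y z) (fun x y => hqn z x y))
  have HA : entH p (fun ω => (X ω, (Yv ω, Z ω)))
      = ∑ z, ∑ x, ∑ y, Real.negMulLog (q x y z) := by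
    unfold entH
    rw [Fintype.sum_prod_type]
    have h1 : ∀ x : α, (∑ yz : β × γ,
        Real.negMulLog (pmfProb p (fun ω => (X ω, (Yv ω, Z ω))) (x, yz)))
        = ∑ y, ∑ z, Real.negMulLog (q x y z) := by
      intro x; rw [Fintype.sum_prod_type]
    rw [Finset.sum_congr rfl fun x _ => h1 x]
    have h2 : ∀ x : α, (∑ y, ∑ z, Real.negMulLog (q x y z))
        = ∑ z, ∑ y, Real.negMulLog (q x y z) := fun x => Finset.sum_comm
    rw [Finset.sum_congr rfl fun x _ => h2 x, Finset.sum_comm]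
  have HZ : entH p Z = ∑ z, Real.negMulLog (∑ x, ∑ y, q x y z) := by
    unfold entH
    exact Finset.sum_congr rfl fun z _ => by rw [pmfProb_marg1 p X Yv Z z]
  have HXZ : entH p (fun ω => (X ω, Z ω)) = ∑ z, ∑ x, Real.negMulLog (∑ y, q x y z) := by
    unfold entH
    rw [Fintype.sum_prod_type]
    rw [Finset.sum_congr rfl fun (x : α) _ => Finset.sum_congr rfl fun (z : γ) _ =>
      (by rw [pmfProb_marg2 p X Yv Z x z] :
        Real.negMulLog (pmfProb p (fun ω => (X ω, Z ω)) (x, z))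
          = Real.negMulLog (∑ y, q x y z))]
    exact Finset.sum_comm
  have HYZ : entH p (fun ω => (Yv ω, Z ω)) = ∑ z, ∑ y, Real.negMulLog (∑ x, q x y z) := by
    unfold entH
    rw [Fintype.sum_prod_type]
    rw [Finset.sum_congr rfl fun (y : β) _ => Finset.sum_congr rfl fun (z : γ) _ =>
      (by rw [pmfProb_marg3 p X Yv Z y z] :
        Real.negMulLog (pmfProb p (fun ω => (Yv ω, Z ω)) (y, z))
          = Real.negMulLog (∑ x, q x y z))]
    exact Finset.sum_comm
  rw [HA, HZ, HXZ, HYZ]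
  rw [← Finset.sum_add_distrib, ← Finset.sum_add_distrib]
  exact key

/-- Subadditivity: `H(X,Y) ≤ H(X) + H(Y)`. -/
lemma entH_pair_le (hp : ∀ ω, 0 ≤ p ω) (hp1 : ∑ ω, p ω = 1) (X : Ω → α) (Yv : Ω → β) :
    entH p (fun ω => (X ω, Yv ω)) ≤ entH p X + entH p Yv := by
  have h := cmi p hp X Yv (fun _ : Ω => (() : Unit))
  have e1 : entH p (fun ω => (X ω, ())) = entH p X :=
    entH_comp p (fun x : α => (x, ())) (fun a b hab => by
      simpa using congrArg Prod.fst hab) X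
  have e2 : entH p (fun ω => (Yv ω, ())) = entH p Yv :=
    entH_comp p (fun y : β => (y, ())) (fun a b hab => by
      simpa using congrArg Prod.fst hab) Yv
  have e3 : entH p (fun ω => (X ω, (Yv ω, ()))) = entH p (fun ω => (X ω, Yv ω)) :=
    entH_comp p (fun xy : α × β => (xy.1, (xy.2, ()))) (fun a b hab => by
      have h1 := congrArg Prod.fst hab
      have h2 := congrArg (fun t => t.2.1) hab
      simp only at h1 h2
      exact Prod.ext h1 h2) (fun ω => (X ω, Yv ω))
  have e0 : entH p (fun _ : Ω => (() : Unit)) = 0 := entH_const p hp1 ()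
  rw [e1, e2, e3, e0] at h
  linarith

/-- Monotonicity: `H(C) ≤ H(A, C)`. -/
lemma entH_le_pair (hp : ∀ ω, 0 ≤ p ω) (A : Ω → α) (C : Ω → γ) :
    entH p C ≤ entH p (fun ω => (A ω, C ω)) := by
  have h := cmi p hp A A C
  have e : entH p (fun ω => (A ω, (A ω, C ω))) = entH p (fun ω => (A ω, C ω)) :=
    entH_comp p (fun ac : α × γ => (ac.1, (ac.1, ac.2))) (fun a b hab => by
      have h1 := congrArg Prod.fst hab
      have h2 := congrArg (fun t => t.2.2) hab
      simp only at h1 h2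
      exact Prod.ext h1 h2) (fun ω => (A ω, C ω))
  rw [e] at h
  linarith

/-- Data processing inequality: `I(M ; h(V)) ≤ I(M ; V)`. -/
lemma mutInfo_data_proc {μ ν : Type*} [Fintype μ] [DecidableEq μ] [Fintype ν]
    [DecidableEq ν] (hp : ∀ ω, 0 ≤ p ω) (M : Ω → μ) (V : Ω → ν) (h : ν → β) :
    mutInfo p M (fun ω => h (V ω)) ≤ mutInfo p M V := by
  have hc := cmi p hp M V (fun ω => h (V ω))
  have e1 : entH p (fun ω => (V ω, h (V ω))) = entH p V :=
    entH_comp p (fun v : ν => (v, h v)) (fun a b hab => by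
      simpa using congrArg Prod.fst hab) V
  have e2 : entH p (fun ω => (M ω, (V ω, h (V ω)))) = entH p (fun ω => (M ω, V ω)) :=
    entH_comp p (fun mv : μ × ν => (mv.1, (mv.2, h mv.2))) (fun a b hab => by
      have h1 := congrArg Prod.fst hab
      have h2 := congrArg (fun t => t.2.1) hab
      simp only at h1 h2
      exact Prod.ext h1 h2) (fun ω => (M ω, V ω))
  rw [e1, e2] at hc
  unfold mutInfo
  linarith

/-- Maximum entropy bound: `H(X) ≤ log |α|`. -/
lemma entH_le_log_card (hp : ∀ ω, 0 ≤ p ω) (hp1 : ∑ ω, p ω = 1) (X : Ω → α) :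
    entH p X ≤ Real.log (Fintype.card α) := by
  have hsum : ∑ x, pmfProb p X x = 1 := by rw [sum_pmfProb, hp1]
  rcases isEmpty_or_nonempty α with hemp | hne
  · rw [Finset.univ_eq_empty, Finset.sum_empty] at hsum
    exact absurd hsum (by norm_num)
  have hn : 0 < (Fintype.card α : ℝ) := by
    exact_mod_cast Fintype.card_pos
  set n : ℝ := (Fintype.card α : ℝ) with hndef
  have key : ∀ x : α, Real.negMulLog (pmfProb p X x)
      ≤ pmfProb p X x * Real.log n + (n⁻¹ - pmfProb p X x) := by
    intro x
    set t := pmfProb p X x with htdef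
    have ht : 0 ≤ t := pmfProb_nonneg p hp X x
    rcases eq_or_lt_of_le ht with h0 | hpos
    · rw [← h0]
      simp only [Real.negMulLog_zero, zero_mul, sub_zero, zero_add]
      positivity
    · have hl := Real.log_le_sub_one_of_pos (show (0:ℝ) < (t * n)⁻¹ by positivity)
      have hle : Real.log (t * n)⁻¹ = -(Real.log t + Real.log n) := by
        rw [Real.log_inv, Real.log_mul (ne_of_gt hpos) (ne_of_gt hn)]
      rw [hle] at hl
      have h2 : t * (t * n)⁻¹ = n⁻¹ := by
        field_simp
      have h3 := mul_le_mul_of_nonneg_left hl (le_of_lt hpos)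
      rw [Real.negMulLog]
      nlinarith
  have hsum2 := Finset.sum_le_sum (s := Finset.univ) (fun x _ => key x)
  have hre : ∑ x : α, (pmfProb p X x * Real.log n + (n⁻¹ - pmfProb p X x))
      = Real.log n := by
    rw [Finset.sum_add_distrib, Finset.sum_sub_distrib, ← Finset.sum_mul, hsum,
      Finset.sum_const, Finset.card_univ, one_mul, nsmul_eq_mul]
    rw [← hndef, mul_inv_cancel₀ (ne_of_gt hn)]
    ring
  rw [hre] at hsum2
  exact le_trans hsum2 (le_of_eq rfl)

end helpers

/-- cut-set bound for the r-wiretap network: if `B = g(Y)` for the tuple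
`Y = (Y 1, …, Y m)` of variables over an alphabet of size `d`, `s` is an `r`-element
subset of the cut, `Z = (Y i)_{i ∈ s}` are the eavesdropped variables, and
`I(M ; Z) = 0`, then `I(M ; B) ≤ (m - r) * log d`. -/
theorem cut_set_bound {Ω α β μ : Type*} [Fintype Ω] [Fintype α] [DecidableEq α]
    [Fintype β] [DecidableEq β] [Fintype μ] [DecidableEq μ]
    (p : Ω → ℝ) (hp : ∀ ω, 0 ≤ p ω) (hp1 : ∑ ω, p ω = 1)
    (m r d : ℕ) (hrm : r ≤ m) (hα : Fintype.card α = d)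
    (Y : Fin m → Ω → α) (M : Ω → μ) (B : Ω → β)
    (s : Finset (Fin m)) (hs : s.card = r)
    (g : (Fin m → α) → β) (hB : ∀ ω, B ω = g (fun i => Y i ω))
    (hI : mutInfo p M (fun ω (e : ↥s) => Y e.1 ω) = 0) :
    mutInfo p M B ≤ ((m : ℝ) - (r : ℝ)) * Real.log d := by
  classical
  set Zf : Ω → (↥s → α) := fun ω (e : ↥s) => Y e.1 ω with hZf
  set Wf : Ω → (↥(sᶜ) → α) := fun ω (e : ↥(sᶜ)) => Y e.1 ω with hWf
  set V : Ω → ((↥s → α) × (↥(sᶜ) → α)) := fun ω => (Zf ω, Wf ω) with hV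
  set h : ((↥s → α) × (↥(sᶜ) → α)) → β := fun zw =>
    g (fun i => if hi : i ∈ s then zw.1 ⟨i, hi⟩ else zw.2 ⟨i, Finset.mem_compl.mpr hi⟩)
    with hh
  have hBV : B = fun ω => h (V ω) := by
    funext ω
    rw [hB ω, hh]
    congr 1
    funext i
    by_cases hi : i ∈ s
    · rw [dif_pos hi]
    · rw [dif_neg hi]
  -- Step 1: data processing
  have step1 : mutInfo p M B ≤ mutInfo p M V := by
    rw [hBV]
    exact mutInfo_data_proc p hp M V h
  -- Step 2: I(M;(Z,W)) ≤ I(M;Z) + H(W)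
  have step2 : mutInfo p M V ≤ mutInfo p M Zf + entH p Wf := by
    have i1 : entH p (fun ω => (Zf ω, Wf ω)) ≤ entH p Zf + entH p Wf :=
      entH_pair_le p hp hp1 Zf Wf
    have i2 : entH p (fun ω => (M ω, Zf ω)) ≤ entH p (fun ω => (M ω, (Zf ω, Wf ω))) := by
      have a1 : entH p (fun ω => (M ω, Zf ω))
          ≤ entH p (fun ω => (Wf ω, (M ω, Zf ω))) :=
        entH_le_pair p hp Wf (fun ω => (M ω, Zf ω))
      have a2 : entH p (fun ω => (M ω, (Zf ω, Wf ω)))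
          = entH p (fun ω => (Wf ω, (M ω, Zf ω))) :=
        (entH_comp p (fun t : (↥(sᶜ) → α) × (μ × (↥s → α)) => (t.2.1, (t.2.2, t.1)))
          (fun a b hab => by
            have h1 := congrArg (fun t => t.1) hab
            have h2 := congrArg (fun t => t.2.1) hab
            have h3 := congrArg (fun t => t.2.2) hab
            simp only at h1 h2 h3
            exact Prod.ext h3 (Prod.ext h1 h2))
          (fun ω => (Wf ω, (M ω, Zf ω))))
      rw [a2]
      exact a1
    unfold mutInfo
    simp only [hV]
    linarith
  -- Step 3: H(W) ≤ (m - r) log d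
  have step3 : entH p Wf ≤ ((m : ℝ) - (r : ℝ)) * Real.log d := by
    have hcard : Fintype.card (↥(sᶜ) → α) = d ^ (m - r) := by
      rw [Fintype.card_fun, hα, Fintype.card_coe, Finset.card_compl, Fintype.card_fin, hs]
    have hb := entH_le_log_card p hp hp1 Wf
    rw [hcard] at hb
    have : Real.log ((d ^ (m - r) : ℕ) : ℝ) = ((m - r : ℕ) : ℝ) * Real.log d := by
      rw [Nat.cast_pow, Real.log_pow]
    rw [this, Nat.cast_sub hrm] at hb
    exact hb
  have hZI : mutInfo p M Zf = 0 := hI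
  linarith
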